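/- Consider delayed gradient descent-ascent z_{k+1} = z_k − αΦ(z_{k−τ_k}) for a convex-concave f on ℝ^m × ℝ^n with gradient bound G > 1 and Lipschitz constant L > 1, delays bounded by τ_max, and saddle point z*. If α ≤ 1/(2√(LGτ_max T)), then for all k ∈ [T]: ‖z_k − z*‖² ≤ 10B, where B = max{‖z_1 − z*‖², G}. -/

import Mathlib

local notation "⟪" x ", " y "⟫" => @inner ℝ _ _ x y

private lemma le_of_sq_le_sq'' {a b : ℝ} (ha : 0 ≤ a) (hb : 0 ≤ b) (h : a^2 ≤ b^2) : a ≤ b := by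
  have := Real.sqrt_le_sqrt h
  rwa [Real.sqrt_sq ha, Real.sqrt_sq hb] at this

private lemma grad_convex_le {E : Type*} [NormedAddCommGroup E] [InnerProductSpace ℝ E]
    [CompleteSpace E]
    {φ : E → ℝ} (hc : ConvexOn ℝ Set.univ φ) {x g : E}
    (hg : HasGradientAt φ g x) (y : E) :
    ⟪g, y - x⟫ ≤ φ y - φ x := by
  have hline : HasDerivAt (fun t : ℝ => (AffineMap.lineMap x y : ℝ →ᵃ[ℝ] E) t) (y - x) 0 := by
    simp only [AffineMap.lineMap_apply, vsub_eq_sub, vadd_eq_add]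
    simpa using ((hasDerivAt_id (0:ℝ)).smul_const (y - x)).add_const x
  have hF : HasFDerivAt φ (InnerProductSpace.toDual ℝ E g)
      ((AffineMap.lineMap x y : ℝ →ᵃ[ℝ] E) 0) := by
    rw [AffineMap.lineMap_apply_zero]; exact hg.hasFDerivAt
  have hd : HasDerivAt (fun t : ℝ => φ ((AffineMap.lineMap x y : ℝ →ᵃ[ℝ] E) t)) ⟪g, y - x⟫ 0 := by
    simpa [InnerProductSpace.toDual_apply_apply, Function.comp_def] using hF.comp_hasDerivAt 0 hline
  have hψc : ConvexOn ℝ Set.univ (fun t : ℝ => φ ((AffineMap.lineMap x y : ℝ →ᵃ[ℝ] E) t)) := by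
    simpa [Function.comp_def] using hc.comp_affineMap (AffineMap.lineMap x y)
  have := hψc.le_slope_of_hasDerivAt (Set.mem_univ (0:ℝ)) (Set.mem_univ (1:ℝ)) one_pos hd
  simpa [slope_def_field] using this

private lemma norm_step_sq {E : Type*} [NormedAddCommGroup E] [InnerProductSpace ℝ E]
    (a s u : E) (α : ℝ) :
    ‖(a - α • u) - s‖^2 = ‖a - s‖^2 - 2*α*⟪u, a - s⟫ + α^2*‖u‖^2 := by
  have h : (a - α • u) - s = (a - s) - α • u := by abel
  rw [h, norm_sub_sq_real, real_inner_smul_right, norm_smul, Real.norm_eq_abs,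
    mul_pow, sq_abs, real_inner_comm]
  ring

private lemma numeric_step {L G α B r τ T' : ℝ}
    (hL : 1 ≤ L) (hG : 1 ≤ G) (hτ : 1 ≤ τ) (hT : 1 ≤ T') (hBG : G ≤ B)
    (hα : 0 ≤ α) (hα2 : α^2 * (L*G*τ*T') ≤ 1/4)
    (hr : 0 ≤ r) (hr2 : r^2 ≤ 10*B) :
    2*α*(2*L*(τ*(α*(Real.sqrt 2*G))))*r + α^2*(2*G^2) ≤ 5*B/T' := by
  have hB1 : (1:ℝ) ≤ B := le_trans hG hBG
  have hs2 : (0:ℝ) ≤ Real.sqrt 2 := Real.sqrt_nonneg 2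
  have hs2sq : (Real.sqrt 2)^2 = 2 := Real.sq_sqrt (by norm_num)
  have hT0 : (0:ℝ) < T' := lt_of_lt_of_le one_pos hT
  rw [le_div_iff₀ hT0]
  have hsr : Real.sqrt 2 * r ≤ 4.5 * B := by
    apply le_of_sq_le_sq'' (by positivity) (by positivity)
    have : (Real.sqrt 2 * r)^2 = 2 * r^2 := by rw [mul_pow, hs2sq]
    rw [this]
    nlinarith
  have h1 : 2*α*(2*L*(τ*(α*(Real.sqrt 2*G))))*r * T' ≤ 4.5 * B := by
    have e : 2*α*(2*L*(τ*(α*(Real.sqrt 2*G))))*r * T'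
        = 4 * (α^2 * (L*G*τ*T')) * (Real.sqrt 2 * r) := by ring
    rw [e]
    have h4 : 4 * (α^2 * (L*G*τ*T')) * (Real.sqrt 2 * r) ≤ 4 * (1/4) * (Real.sqrt 2 * r) := by
      apply mul_le_mul_of_nonneg_right _ (by positivity)
      nlinarith
    calc 4 * (α^2 * (L*G*τ*T')) * (Real.sqrt 2 * r) ≤ 4 * (1/4) * (Real.sqrt 2 * r) := h4
      _ = Real.sqrt 2 * r := by ring
      _ ≤ 4.5 * B := hsr
  have h2 : α^2*(2*G^2) * T' ≤ 0.5 * B := by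
    have hG0 : (0:ℝ) ≤ G := by linarith
    have hαsq : (0:ℝ) ≤ α^2 := sq_nonneg α
    have hkey : α^2 * (G * T') ≤ 1/4 := by
      have hLτ : (0:ℝ) ≤ L*τ - 1 := by nlinarith
      have : α^2 * (G*T') ≤ α^2 * (L*G*τ*T') := by
        apply mul_le_mul_of_nonneg_left _ hαsq
        nlinarith [mul_nonneg (mul_nonneg hG0 hT0.le) hLτ]
      linarith
    nlinarith
  nlinarith

set_option maxHeartbeats 1000000 in
/-- Lemma 7: boundedness of the iterates of delayed gradient
descent-ascent for smooth convex-concave `f` with bounded gradients. -/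
theorem DGDA_bounded_iterates
    {m n : ℕ}
    (f : EuclideanSpace ℝ (Fin m) → EuclideanSpace ℝ (Fin n) → ℝ)
    (gx : EuclideanSpace ℝ (Fin m) → EuclideanSpace ℝ (Fin n) → EuclideanSpace ℝ (Fin m))
    (gy : EuclideanSpace ℝ (Fin m) → EuclideanSpace ℝ (Fin n) → EuclideanSpace ℝ (Fin n))
    (hgx : ∀ x y, HasGradientAt (fun x' => f x' y) (gx x y) x)
    (hgy : ∀ x y, HasGradientAt (fun y' => f x y') (gy x y) y)
    (hconv : ∀ y, ConvexOn ℝ Set.univ (fun x => f x y))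
    (hconc : ∀ x, ConcaveOn ℝ Set.univ (fun y => f x y))
    (G L : ℝ) (hG : 1 < G) (hL : 1 < L)
    (hGx : ∀ x y, ‖gx x y‖ ≤ G) (hGy : ∀ x y, ‖gy x y‖ ≤ G)
    (hLx : ∀ x₁ y₁ x₂ y₂, ‖gx x₁ y₁ - gx x₂ y₂‖ ≤ L * (‖x₁ - x₂‖ + ‖y₁ - y₂‖))
    (hLy : ∀ x₁ y₁ x₂ y₂, ‖gy x₁ y₁ - gy x₂ y₂‖ ≤ L * (‖x₁ - x₂‖ + ‖y₁ - y₂‖))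
    -- saddle point
    (xstar : EuclideanSpace ℝ (Fin m)) (ystar : EuclideanSpace ℝ (Fin n))
    (hsaddle : ∀ x y, f xstar y ≤ f xstar ystar ∧ f xstar ystar ≤ f x ystar)
    (zstar : WithLp 2 (EuclideanSpace ℝ (Fin m) × EuclideanSpace ℝ (Fin n)))
    (hzstar : zstar = (WithLp.equiv 2 _).symm (xstar, ystar))
    -- the operator Φ
    (Φ : WithLp 2 (EuclideanSpace ℝ (Fin m) × EuclideanSpace ℝ (Fin n)) →
         WithLp 2 (EuclideanSpace ℝ (Fin m) × EuclideanSpace ℝ (Fin n)))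
    (hΦ : ∀ z, Φ z =
      (WithLp.equiv 2 (EuclideanSpace ℝ (Fin m) × EuclideanSpace ℝ (Fin n))).symm
        (gx (WithLp.equiv 2 _ z).1 (WithLp.equiv 2 _ z).2,
         -(gy (WithLp.equiv 2 _ z).1 (WithLp.equiv 2 _ z).2)))
    -- delays, horizon, step size
    (τ : ℕ → ℕ) (τmax : ℕ) (hτmax : 1 ≤ τmax) (hτ : ∀ k, τ k ≤ τmax)
    (T : ℕ) (hT : 1 ≤ T)
    (α : ℝ) (hαpos : 0 < α)
    (hα : α ≤ 1 / (2 * Real.sqrt (L * G * τmax * T)))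
    -- DGDA iterates, started at z 1
    (z : ℕ → WithLp 2 (EuclideanSpace ℝ (Fin m) × EuclideanSpace ℝ (Fin n)))
    (hstep : ∀ k, 1 ≤ k → z (k + 1) = z k - α • Φ (z (max (k - τ k) 1)))
    (B : ℝ) (hB : B = max (‖z 1 - zstar‖ ^ 2) G) :
    ∀ k ∈ Finset.Icc 1 T, ‖z k - zstar‖ ^ 2 ≤ 10 * B := by
  have hG0 : (0:ℝ) < G := lt_trans one_pos hG
  have hL0 : (0:ℝ) < L := lt_trans one_pos hL
  have hBG : G ≤ B := hB ▸ le_max_right _ _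
  have hB1 : (1:ℝ) ≤ B := le_trans hG.le hBG
  have hBz : ‖z 1 - zstar‖^2 ≤ B := hB ▸ le_max_left _ _
  have hτR : (1:ℝ) ≤ (τmax:ℝ) := by exact_mod_cast hτmax
  have hTR : (1:ℝ) ≤ (T:ℝ) := by exact_mod_cast hT
  have hT0 : (0:ℝ) < (T:ℝ) := by linarith
  have hτ0 : (0:ℝ) < (τmax:ℝ) := by linarith
  -- step size squared bound
  have hα2 : α^2 * (L*G*(τmax:ℝ)*(T:ℝ)) ≤ 1/4 := by
    have hA0 : (0:ℝ) < L * G * (τmax:ℝ) * (T:ℝ) := by positivity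
    have hsA : (0:ℝ) < Real.sqrt (L * G * (τmax:ℝ) * (T:ℝ)) := Real.sqrt_pos.mpr hA0
    have h1 : α * (2 * Real.sqrt (L * G * (τmax:ℝ) * (T:ℝ))) ≤ 1 := by
      rw [← le_div_iff₀ (by positivity)]
      exact hα
    have h2 : (α * (2 * Real.sqrt (L * G * (τmax:ℝ) * (T:ℝ))))^2 ≤ 1 := by
      nlinarith [mul_nonneg hαpos.le (by positivity : (0:ℝ) ≤ 2 * Real.sqrt (L * G * (τmax:ℝ) * (T:ℝ)))]
    have h3 : (α * (2 * Real.sqrt (L * G * (τmax:ℝ) * (T:ℝ))))^2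
        = α^2 * 4 * (L * G * (τmax:ℝ) * (T:ℝ)) := by
      rw [mul_pow, mul_pow, Real.sq_sqrt hA0.le]; ring
    nlinarith
  -- components of Φ and zstar
  have hΦ1 : ∀ w, (Φ w).fst = gx w.fst w.snd := by intro w; rw [hΦ w]; rfl
  have hΦ2 : ∀ w, (Φ w).snd = -(gy w.fst w.snd) := by intro w; rw [hΦ w]; rfl
  have hz1 : zstar.fst = xstar := by rw [hzstar]; rfl
  have hz2 : zstar.snd = ystar := by rw [hzstar]; rfl
  -- norm bound on Φ
  have hΦsq : ∀ w, ‖Φ w‖^2 ≤ 2*G^2 := by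
    intro w
    rw [WithLp.prod_norm_sq_eq_of_L2, hΦ1 w, hΦ2 w, norm_neg]
    have h1 := hGx w.fst w.snd
    have h2 := hGy w.fst w.snd
    nlinarith [norm_nonneg (gx w.fst w.snd), norm_nonneg (gy w.fst w.snd)]
  have hΦn : ∀ w, ‖Φ w‖ ≤ Real.sqrt 2 * G := by
    intro w
    apply le_of_sq_le_sq'' (norm_nonneg _) (by positivity)
    have : (Real.sqrt 2 * G)^2 = 2 * G^2 := by
      rw [mul_pow, Real.sq_sqrt (by norm_num : (0:ℝ) ≤ 2)]
    rw [this]; exact hΦsq w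
  -- Lipschitz bound on Φ
  have hΦlip : ∀ w w', ‖Φ w - Φ w'‖ ≤ 2*L*‖w - w'‖ := by
    intro w w'
    apply le_of_sq_le_sq'' (norm_nonneg _) (by positivity)
    rw [WithLp.prod_norm_sq_eq_of_L2, WithLp.sub_fst, WithLp.sub_snd, hΦ1, hΦ2, hΦ1, hΦ2]
    have hneg : ‖-(gy w.fst w.snd) - -(gy w'.fst w'.snd)‖
        = ‖gy w.fst w.snd - gy w'.fst w'.snd‖ := by
      rw [neg_sub_neg, norm_sub_rev]
    rw [hneg]
    have hw : ‖w - w'‖^2 = ‖w.fst - w'.fst‖^2 + ‖w.snd - w'.snd‖^2 := by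
      rw [WithLp.prod_norm_sq_eq_of_L2, WithLp.sub_fst, WithLp.sub_snd]
    have hx' := hLx w.fst w.snd w'.fst w'.snd
    have hy' := hLy w.fst w.snd w'.fst w'.snd
    have e : (2*L*‖w-w'‖)^2 = 4*L^2*(‖w.fst-w'.fst‖^2 + ‖w.snd-w'.snd‖^2) := by
      rw [mul_pow, mul_pow, hw]; ring
    rw [e]
    nlinarith [norm_nonneg (gx w.fst w.snd - gx w'.fst w'.snd),
      norm_nonneg (gy w.fst w.snd - gy w'.fst w'.snd),
      mul_self_le_mul_self (norm_nonneg (gx w.fst w.snd - gx w'.fst w'.snd)) hx',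
      mul_self_le_mul_self (norm_nonneg (gy w.fst w.snd - gy w'.fst w'.snd)) hy',
      sq_nonneg (L*(‖w.fst - w'.fst‖ - ‖w.snd - w'.snd‖)), hL0.le]
  -- monotonicity of Φ at zstar
  have hmono : ∀ w, (0:ℝ) ≤ ⟪Φ w, w - zstar⟫ := by
    intro w
    have h1 : ⟪gx w.fst w.snd, xstar - w.fst⟫ ≤ f xstar w.snd - f w.fst w.snd :=
      grad_convex_le (hconv w.snd) (hgx w.fst w.snd) xstar
    have hneg : HasGradientAt (fun y' => -(f w.fst y')) (-(gy w.fst w.snd)) w.snd := by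
      rw [hasGradientAt_iff_hasFDerivAt]
      have := (hgy w.fst w.snd).hasFDerivAt.neg
      simpa [Pi.neg_def] using this
    have hcneg : ConvexOn ℝ Set.univ (fun y' => -(f w.fst y')) :=
      (hconc w.fst).neg
    have h2 : ⟪-(gy w.fst w.snd), ystar - w.snd⟫ ≤ -(f w.fst ystar) - -(f w.fst w.snd) :=
      grad_convex_le hcneg hneg ystar
    have hI : ⟪Φ w, w - zstar⟫
        = ⟪gx w.fst w.snd, w.fst - xstar⟫ + ⟪-(gy w.fst w.snd), w.snd - ystar⟫ := by
      rw [WithLp.prod_inner_apply]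
      change ⟪(Φ w).fst, (w - zstar).fst⟫ + ⟪(Φ w).snd, (w - zstar).snd⟫ = _
      rw [WithLp.sub_fst, WithLp.sub_snd, hΦ1, hΦ2, hz1, hz2]
    have e1 : ⟪gx w.fst w.snd, w.fst - xstar⟫ = -⟪gx w.fst w.snd, xstar - w.fst⟫ := by
      rw [← inner_neg_right, neg_sub]
    have e2 : ⟪-(gy w.fst w.snd), w.snd - ystar⟫ = -⟪-(gy w.fst w.snd), ystar - w.snd⟫ := by
      rw [← inner_neg_right, neg_sub]
    have hs1 := (hsaddle w.fst w.snd).1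
    have hs2 := (hsaddle w.fst w.snd).2
    rw [hI, e1, e2]
    linarith
  -- step norm bound
  have hstepn : ∀ k, 1 ≤ k → ‖z (k+1) - z k‖ ≤ α * (Real.sqrt 2 * G) := by
    intro k hk
    rw [hstep k hk]
    have e : z k - α • Φ (z (max (k - τ k) 1)) - z k = -(α • Φ (z (max (k - τ k) 1))) := by abel
    rw [e, norm_neg, norm_smul, Real.norm_eq_abs, abs_of_pos hαpos]
    exact mul_le_mul_of_nonneg_left (hΦn _) hαpos.le
  -- chain bound
  have hchain : ∀ d j, 1 ≤ j → ‖z (j+d) - z j‖ ≤ (d:ℝ) * (α * (Real.sqrt 2 * G)) := by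
    intro d
    induction d with
    | zero => intro j hj; simp
    | succ d ih =>
      intro j hj
      have h1 : ‖z (j+d+1) - z j‖ ≤ ‖z (j+d+1) - z (j+d)‖ + ‖z (j+d) - z j‖ := by
        have := dist_triangle (z (j+d+1)) (z (j+d)) (z j)
        simpa [dist_eq_norm] using this
      have h2 := hstepn (j+d) (le_trans hj (Nat.le_add_right j d))
      have h3 := ih j hj
      have e : j + (d+1) = j + d + 1 := by omega
      rw [e]
      push_cast
      linarith
  -- lag bound
  have hlag : ∀ k, 1 ≤ k → ‖z k - z (max (k - τ k) 1)‖ ≤ (τmax:ℝ) * (α * (Real.sqrt 2 * G)) := by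
    intro k hk
    have hj1 : 1 ≤ max (k - τ k) 1 := le_max_right _ _
    have hd : k - max (k - τ k) 1 ≤ τmax := by
      have := hτ k; omega
    have hk' : k = max (k - τ k) 1 + (k - max (k - τ k) 1) := by omega
    calc ‖z k - z (max (k - τ k) 1)‖
        = ‖z (max (k - τ k) 1 + (k - max (k - τ k) 1)) - z (max (k - τ k) 1)‖ := by rw [← hk']
      _ ≤ ((k - max (k - τ k) 1 : ℕ):ℝ) * (α * (Real.sqrt 2 * G)) := hchain _ _ hj1
      _ ≤ (τmax:ℝ) * (α * (Real.sqrt 2 * G)) := by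
          apply mul_le_mul_of_nonneg_right _ (by positivity)
          exact_mod_cast hd
  -- one-step recursion
  have hrec : ∀ k, 1 ≤ k → ‖z (k+1) - zstar‖^2 ≤ ‖z k - zstar‖^2
      + 2*α*(2*L*((τmax:ℝ)*(α*(Real.sqrt 2*G))))*‖z k - zstar‖ + α^2*(2*G^2) := by
    intro k hk
    rw [hstep k hk, norm_step_sq]
    set w := z (max (k - τ k) 1) with hw
    have hm := hmono (z k)
    have hsplit : ⟪Φ w, z k - zstar⟫
        = ⟪Φ (z k), z k - zstar⟫ + ⟪Φ w - Φ (z k), z k - zstar⟫ := by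
      rw [inner_sub_left]; ring
    have habs : -(‖Φ w - Φ (z k)‖ * ‖z k - zstar‖) ≤ ⟪Φ w - Φ (z k), z k - zstar⟫ := by
      have h := abs_real_inner_le_norm (Φ w - Φ (z k)) (z k - zstar)
      have h' := neg_abs_le (⟪Φ w - Φ (z k), z k - zstar⟫)
      linarith
    have hlip2 : ‖Φ w - Φ (z k)‖ ≤ 2*L*((τmax:ℝ)*(α*(Real.sqrt 2*G))) := by
      calc ‖Φ w - Φ (z k)‖ ≤ 2*L*‖w - z k‖ := hΦlip w (z k)
        _ ≤ 2*L*((τmax:ℝ)*(α*(Real.sqrt 2*G))) := by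
            apply mul_le_mul_of_nonneg_left _ (by positivity)
            rw [norm_sub_rev]; exact hlag k hk
    have hls : ‖Φ w - Φ (z k)‖ * ‖z k - zstar‖
        ≤ (2*L*((τmax:ℝ)*(α*(Real.sqrt 2*G)))) * ‖z k - zstar‖ :=
      mul_le_mul_of_nonneg_right hlip2 (norm_nonneg _)
    have hinlb : -((2*L*((τmax:ℝ)*(α*(Real.sqrt 2*G)))) * ‖z k - zstar‖)
        ≤ ⟪Φ w, z k - zstar⟫ := by
      rw [hsplit]; linarith
    have hcross : -(2*α*⟪Φ w, z k - zstar⟫)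
        ≤ 2*α*((2*L*((τmax:ℝ)*(α*(Real.sqrt 2*G)))) * ‖z k - zstar‖) := by
      nlinarith [mul_nonneg hαpos.le (by linarith :
        (0:ℝ) ≤ (2*L*((τmax:ℝ)*(α*(Real.sqrt 2*G)))) * ‖z k - zstar‖ + ⟪Φ w, z k - zstar⟫)]
    have hN : α^2*‖Φ w‖^2 ≤ α^2*(2*G^2) :=
      mul_le_mul_of_nonneg_left (hΦsq w) (sq_nonneg α)
    nlinarith [hcross, hN]
  -- main induction
  have key : ∀ j : ℕ, j + 1 ≤ T → ‖z (j+1) - zstar‖^2 ≤ B + (j:ℝ) * (5*B/(T:ℝ)) := by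
    intro j
    induction j with
    | zero => intro _; simpa using hBz
    | succ j ih =>
      intro hjT
      have hj1T : j + 1 ≤ T := by omega
      have ihj := ih hj1T
      have hjcast : ((j:ℝ)) ≤ (T:ℝ) := by exact_mod_cast le_trans (Nat.le_succ j) hj1T
      have hstepc : (j:ℝ) * (5*B/(T:ℝ)) ≤ 5*B := by
        calc (j:ℝ) * (5*B/(T:ℝ)) ≤ (T:ℝ) * (5*B/(T:ℝ)) := by
              apply mul_le_mul_of_nonneg_right hjcast (by positivity)
          _ = 5*B := by field_simp
      have h10 : ‖z (j+1) - zstar‖^2 ≤ 10*B := by linarith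
      have hr := hrec (j+1) (Nat.le_add_left 1 j)
      have hnum : 2*α*(2*L*((τmax:ℝ)*(α*(Real.sqrt 2*G))))*‖z (j+1) - zstar‖ + α^2*(2*G^2)
          ≤ 5*B/(T:ℝ) :=
        numeric_step hL.le hG.le hτR hTR hBG hαpos.le hα2 (norm_nonneg _) h10
      have e : ((j:ℕ)+1+1) = j + 2 := by omega
      push_cast
      calc ‖z (j+1+1) - zstar‖^2
          ≤ ‖z (j+1) - zstar‖^2
            + (2*α*(2*L*((τmax:ℝ)*(α*(Real.sqrt 2*G))))*‖z (j+1) - zstar‖ + α^2*(2*G^2)) := by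
            linarith
        _ ≤ B + (j:ℝ) * (5*B/(T:ℝ)) + 5*B/(T:ℝ) := by linarith
        _ = B + ((j:ℝ)+1) * (5*B/(T:ℝ)) := by ring
  -- conclusion
  intro k hk
  rw [Finset.mem_Icc] at hk
  obtain ⟨hk1, hkT⟩ := hk
  have hkey := key (k-1) (by omega)
  have e : k - 1 + 1 = k := by omega
  rw [e] at hkey
  have hjcast : ((k-1:ℕ):ℝ) ≤ (T:ℝ) := by exact_mod_cast le_trans (Nat.sub_le k 1) hkT
  have hstepc : ((k-1:ℕ):ℝ) * (5*B/(T:ℝ)) ≤ 5*B := by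
    calc ((k-1:ℕ):ℝ) * (5*B/(T:ℝ)) ≤ (T:ℝ) * (5*B/(T:ℝ)) := by
          apply mul_le_mul_of_nonneg_right hjcast (by positivity)
      _ = 5*B := by field_simp
  linarith
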